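/- Let M ⊆ B(H) be a von Neumann algebra and K a Hilbert space. An operator x on H ⊗ K commutes with m' ⊗ 1 for all m' in the commutant M' if and only if x belongs to the von Neumann algebra generated by {m ⊗ t : m ∈ M, t ∈ B(K)} (i.e., the commutant of M' ⊗ ℂ1 equals M ⊗̄ B(K)). In the special case K = ℂ, an operator on H ⊗ ℂ commuting with all m' ⊗ 1, m' ∈ M', is of the form m ⊗ 1 for some m ∈ M'' = M. -/

import Mathlib

open scoped ENNReal InnerProductSpace
open ContinuousLinearMap

namespace Stmt11Aux

variable {H : Type*} [NormedAddCommGroup H] [InnerProductSpace ℂ H]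
    [CompleteSpace H] {ι : Type*} [DecidableEq ι]

omit [CompleteSpace H] in
lemma single_add {G : ι → Type*} [∀ i, NormedAddCommGroup (G i)] (i : ι) (a b : G i) :
    lp.single (E := G) 2 i (a + b) = lp.single 2 i a + lp.single 2 i b := by
  refine lp.ext (funext fun j => ?_)
  rw [lp.coeFn_add, Pi.add_apply]
  by_cases h : j = i
  · subst h; rw [lp.single_apply_self, lp.single_apply_self, lp.single_apply_self]
  · rw [lp.single_apply_ne _ _ _ h, lp.single_apply_ne _ _ _ h, lp.single_apply_ne _ _ _ h,
      add_zero]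

lemma memℓp_norm {G : ι → Type*} [∀ i, NormedAddCommGroup (G i)] (f : lp G 2) :
    Memℓp (fun j => ‖f j‖) (2 : ℝ≥0∞) := by
  apply memℓp_gen
  have h2 : (0:ℝ) < (2 : ℝ≥0∞).toReal := by norm_num
  have := (memℓp_gen_iff h2).1 (lp.memℓp f)
  simpa using this

lemma summable_smul_of_memℓp (c : ι → ℂ) (hc : Memℓp c 2) (f : lp (fun _ : ι => H) 2) :
    Summable fun j => c j • (f j : H) := by
  have hconj : Real.HolderConjugate ((2:ℝ≥0∞).toReal) ((2:ℝ≥0∞).toReal) := by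
    rw [Real.holderConjugate_iff_eq_conjExponent (by norm_num)]; norm_num
  set A : lp (fun _ : ι => ℝ) 2 := ⟨fun j => ‖(⟨c, hc⟩ : lp (fun _ : ι => ℂ) 2) j‖,
    memℓp_norm (⟨c, hc⟩ : lp (fun _ : ι => ℂ) 2)⟩ with hA
  set B : lp (fun _ : ι => ℝ) 2 := ⟨fun j => ‖f j‖, memℓp_norm f⟩ with hB
  have h := lp.summable_mul hconj A B
  refine Summable.of_norm (h.congr fun j => ?_)
  show ‖A j‖ * ‖B j‖ = ‖c j • f j‖
  have hAj : A j = ‖c j‖ := rfl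
  have hBj : B j = ‖f j‖ := rfl
  rw [hAj, hBj, norm_smul, norm_norm, norm_norm]

lemma memℓp_conj (g : lp (fun _ : ι => ℂ) 2) :
    Memℓp (fun j => (starRingEnd ℂ) (g j)) (2 : ℝ≥0∞) := by
  apply memℓp_gen
  have h2 : (0:ℝ) < (2 : ℝ≥0∞).toReal := by norm_num
  have := (memℓp_gen_iff h2).1 (lp.memℓp g)
  simpa using this

/-- matrix units on `ℓ²(ι, ℂ)` -/
noncomputable def eM (i j : ι) : lp (fun _ : ι => ℂ) 2 →L[ℂ] lp (fun _ : ι => ℂ) 2 :=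
  ContinuousLinearMap.smulRight
    ((innerSL ℂ (lp.single 2 j (1:ℂ) : lp (fun _ : ι => ℂ) 2)))
    (lp.single 2 i (1:ℂ))

omit [CompleteSpace H] [DecidableEq ι] in
lemma ext_op {f g : lp (fun _ : ι => H) 2} (h : ∀ i, (f : ∀ _ : ι, H) i = g i) : f = g :=
  lp.ext (funext h)

section amp

variable (amp : (H →L[ℂ] H) →⋆ₐ[ℂ]
      (lp (fun _ : ι => H) 2 →L[ℂ] lp (fun _ : ι => H) 2))
    (hamp : ∀ (m : H →L[ℂ] H) (f : lp (fun _ : ι => H) 2) (i : ι),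
      (amp m f : ∀ _ : ι, H) i = m (f i))
    (ampK : (lp (fun _ : ι => ℂ) 2 →L[ℂ] lp (fun _ : ι => ℂ) 2) →⋆ₐ[ℂ]
      (lp (fun _ : ι => H) 2 →L[ℂ] lp (fun _ : ι => H) 2))
    (hampK : ∀ (t : lp (fun _ : ι => ℂ) 2 →L[ℂ] lp (fun _ : ι => ℂ) 2)
      (f : lp (fun _ : ι => H) 2) (i : ι),
      (ampK t f : ∀ _ : ι, H) i =
        ∑' j : ι, (⟪(lp.single 2 i (1 : ℂ) : lp (fun _ : ι => ℂ) 2),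
          t (lp.single 2 j (1 : ℂ))⟫_ℂ) • f j)

include hamp in
lemma amp_single (m : H →L[ℂ] H) (j : ι) (h : H) :
    amp m (lp.single 2 j h) = lp.single 2 j (m h) := by
  refine ext_op fun i => ?_
  rw [hamp]
  by_cases hij : i = j
  · subst hij; rw [lp.single_apply_self, lp.single_apply_self]
  · rw [lp.single_apply_ne _ _ _ hij, lp.single_apply_ne _ _ _ hij, map_zero]

include hampK in
lemma ampK_eM (i j : ι) (f : lp (fun _ : ι => H) 2) :
    ampK (eM i j) f = lp.single 2 i (f j) := by
  refine ext_op fun k => ?_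
  rw [hampK]
  have hterm : ∀ l : ι,
      (⟪(lp.single 2 k (1:ℂ) : lp (fun _ : ι => ℂ) 2), eM i j (lp.single 2 l (1:ℂ))⟫_ℂ) • f l
        = if l = j then (if k = i then f j else 0) else 0 := by
    intro l
    rw [eM, ContinuousLinearMap.smulRight_apply, innerSL_apply_apply, inner_smul_right,
      lp.inner_single_left, lp.inner_single_left, RCLike.inner_apply, RCLike.inner_apply,
      map_one, mul_one, mul_one]
    by_cases hlj : l = j
    · subst hlj
      rw [if_pos rfl, lp.single_apply_self]
      by_cases hki : k = i
      · subst hki; rw [if_pos rfl, lp.single_apply_self, one_mul, one_smul]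
      · rw [if_neg hki, lp.single_apply_ne _ _ _ hki, one_mul, zero_smul]
    · rw [if_neg hlj, lp.single_apply_ne _ _ _ (fun h => hlj h.symm), zero_mul, zero_smul]
  rw [tsum_congr hterm, tsum_ite_eq]
  by_cases hki : k = i
  · subst hki; rw [if_pos rfl, lp.single_apply_self]
  · rw [if_neg hki, lp.single_apply_ne _ _ _ hki]

omit [CompleteSpace H] in
lemma inner_single_adjoint (t : lp (fun _ : ι => ℂ) 2 →L[ℂ] lp (fun _ : ι => ℂ) 2) (i j : ι) :
    ⟪(lp.single 2 i (1:ℂ) : lp (fun _ : ι => ℂ) 2), t (lp.single 2 j 1)⟫_ℂ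
      = (starRingEnd ℂ) ((ContinuousLinearMap.adjoint t (lp.single 2 i 1)) j) := by
  rw [← ContinuousLinearMap.adjoint_inner_left, lp.inner_single_right]
  simp [RCLike.inner_apply]

include hamp hampK in
lemma amp_comm_ampK (m : H →L[ℂ] H)
    (t : lp (fun _ : ι => ℂ) 2 →L[ℂ] lp (fun _ : ι => ℂ) 2) :
    amp m * ampK t = ampK t * amp m := by
  ext f i
  set c : ι → ℂ := fun j =>
    ⟪(lp.single 2 i (1 : ℂ) : lp (fun _ : ι => ℂ) 2), t (lp.single 2 j (1 : ℂ))⟫_ℂ with hc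
  have hmem : Memℓp c 2 := by
    have hcc : c = fun j =>
        (starRingEnd ℂ) ((ContinuousLinearMap.adjoint t (lp.single 2 i 1)) j) :=
      funext fun j => inner_single_adjoint t i j
    rw [hcc]; exact memℓp_conj _
  have hsum : Summable fun j => c j • (f j : H) := summable_smul_of_memℓp c hmem f
  have lhs : ((amp m * ampK t) f : ∀ _ : ι, H) i = ∑' j, c j • m (f j) := by
    rw [ContinuousLinearMap.mul_apply, hamp, hampK, m.map_tsum hsum]
    exact tsum_congr fun j => m.map_smul _ _
  have rhs : ((ampK t * amp m) f : ∀ _ : ι, H) i = ∑' j, c j • m (f j) := by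
    rw [ContinuousLinearMap.mul_apply, hampK]
    exact tsum_congr fun j => by rw [hamp]
  rw [lhs, rhs]

end amp

end Stmt11Aux

open Stmt11Aux

set_option maxHeartbeats 2000000 in
theorem stmt_11 {H : Type*} [NormedAddCommGroup H] [InnerProductSpace ℂ H]
    [CompleteSpace H] {ι : Type*} [Countable ι] [DecidableEq ι]
    (M : VonNeumannAlgebra H)
    (amp : (H →L[ℂ] H) →⋆ₐ[ℂ]
      (lp (fun _ : ι => H) 2 →L[ℂ] lp (fun _ : ι => H) 2))
    (hamp : ∀ (m : H →L[ℂ] H) (f : lp (fun _ : ι => H) 2) (i : ι),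
      (amp m f : ∀ _ : ι, H) i = m (f i))
    (ampK : (lp (fun _ : ι => ℂ) 2 →L[ℂ] lp (fun _ : ι => ℂ) 2) →⋆ₐ[ℂ]
      (lp (fun _ : ι => H) 2 →L[ℂ] lp (fun _ : ι => H) 2))
    (hampK : ∀ (t : lp (fun _ : ι => ℂ) 2 →L[ℂ] lp (fun _ : ι => ℂ) 2)
      (f : lp (fun _ : ι => H) 2) (i : ι),
      (ampK t f : ∀ _ : ι, H) i =
        ∑' j : ι, (⟪(lp.single 2 i (1 : ℂ) : lp (fun _ : ι => ℂ) 2),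
          t (lp.single 2 j (1 : ℂ))⟫_ℂ) • f j) :
    (∀ x : lp (fun _ : ι => H) 2 →L[ℂ] lp (fun _ : ι => H) 2,
      (∀ m' ∈ M.commutant, amp m' * x = x * amp m') ↔
        x ∈ Set.centralizer (Set.centralizer
          {y | ∃ m ∈ M, ∃ t, y = amp m * ampK t})) ∧
    (∀ x : H →L[ℂ] H, (∀ m' ∈ M.commutant, m' * x = x * m') → x ∈ M) := by
  constructor
  · -- first part
    intro x
    rcases isEmpty_or_nonempty ι with hι | hι
    · -- trivial case: everything is zero
      haveI : Subsingleton (lp (fun _ : ι => H) 2) :=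
        ⟨fun a b => lp.ext (funext fun i => isEmptyElim i)⟩
      haveI : Subsingleton (lp (fun _ : ι => H) 2 →L[ℂ] lp (fun _ : ι => H) 2) :=
        ⟨fun a b => ContinuousLinearMap.ext fun v => Subsingleton.elim _ _⟩
      exact iff_of_true (fun m' _ => Subsingleton.elim _ _)
        (Set.mem_centralizer_iff.mpr fun g _ => Subsingleton.elim _ _)
    · obtain ⟨i₀⟩ := hι
      -- the key set identity
      have hset : Set.centralizer {y | ∃ m ∈ M, ∃ t, y = amp m * ampK t}
          = amp '' (M.commutant : Set (H →L[ℂ] H)) := by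
        apply Set.Subset.antisymm
        · intro y hy
          rw [Set.mem_centralizer_iff] at hy
          have hyM : ∀ m ∈ M, amp m * y = y * amp m := by
            intro m hm
            have := hy (amp m * ampK 1) ⟨m, hm, 1, rfl⟩
            simpa [map_one] using this
          have hyK : ∀ t, ampK t * y = y * ampK t := by
            intro t
            have := hy (amp 1 * ampK t) ⟨1, one_mem M, t, rfl⟩
            simpa [map_one] using this
          -- from commutation with matrix units: y (single k h) = single k ((y (single j h)) j)
          have key : ∀ (k j : ι) (h : H),
              y (lp.single 2 k h : lp (fun _ : ι => H) 2) = lp.single 2 k ((y (lp.single 2 j h : lp (fun _ : ι => H) 2) : ∀ _ : ι, H) j) := by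
            intro k j h
            have := congrArg (fun (w : lp (fun _ : ι => H) 2 →L[ℂ] lp (fun _ : ι => H) 2) =>
              w (lp.single 2 j h : lp (fun _ : ι => H) 2)) (hyK (eM k j))
            simp only [ContinuousLinearMap.mul_apply] at this
            rw [ampK_eM ampK hampK, ampK_eM ampK hampK, lp.single_apply_self] at this
            exact this.symm
          -- define z
          have hbound : ∀ h : H, ‖(y (lp.single 2 i₀ h : lp (fun _ : ι => H) 2) : ∀ _ : ι, H) i₀‖ ≤ ‖y‖ * ‖h‖ := by
            intro h
            calc ‖(y (lp.single 2 i₀ h : lp (fun _ : ι => H) 2) : ∀ _ : ι, H) i₀‖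
                ≤ ‖y (lp.single 2 i₀ h : lp (fun _ : ι => H) 2)‖ := lp.norm_apply_le_norm two_ne_zero _ i₀
              _ ≤ ‖y‖ * ‖(lp.single 2 i₀ h : lp (fun _ : ι => H) 2)‖ := y.le_opNorm _
              _ = ‖y‖ * ‖h‖ := by
                  rw [lp.norm_single (E := fun _ : ι => H) (by norm_num : (0:ℝ≥0∞) < 2) i₀ h]
          have hadd : ∀ a b : H,
              (y (lp.single 2 i₀ (a + b) : lp (fun _ : ι => H) 2) : ∀ _ : ι, H) i₀
                = (y (lp.single 2 i₀ a : lp (fun _ : ι => H) 2) : ∀ _ : ι, H) i₀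
                  + (y (lp.single 2 i₀ b : lp (fun _ : ι => H) 2) : ∀ _ : ι, H) i₀ := by
            intro a b
            rw [single_add, map_add]
            rfl
          have hsmul : ∀ (c : ℂ) (a : H),
              (y (lp.single 2 i₀ (c • a) : lp (fun _ : ι => H) 2) : ∀ _ : ι, H) i₀
                = c • (y (lp.single 2 i₀ a : lp (fun _ : ι => H) 2) : ∀ _ : ι, H) i₀ := by
            intro c a
            rw [lp.single_smul, map_smul]
            rfl
          set z₀ : H →ₗ[ℂ] H :=
            { toFun := fun h => (y (lp.single 2 i₀ h : lp (fun _ : ι => H) 2) : ∀ _ : ι, H) i₀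
              map_add' := hadd
              map_smul' := hsmul } with hz₀
          set z : H →L[ℂ] H := z₀.mkContinuous ‖y‖ hbound with hz
          have hz_apply : ∀ h : H, z h = (y (lp.single 2 i₀ h : lp (fun _ : ι => H) 2) : ∀ _ : ι, H) i₀ := fun _ => rfl
          have hy_single : ∀ (k : ι) (h : H), y (lp.single 2 k h : lp (fun _ : ι => H) 2) = lp.single 2 k (z h) := by
            intro k h; rw [hz_apply]; exact key k i₀ h
          refine ⟨z, ?_, ?_⟩
          · -- z ∈ M.commutant
            rw [SetLike.mem_coe, VonNeumannAlgebra.mem_commutant_iff]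
            intro m hm
            ext h
            have := congrArg (fun (w : lp (fun _ : ι => H) 2 →L[ℂ] lp (fun _ : ι => H) 2) =>
              (w (lp.single 2 i₀ h : lp (fun _ : ι => H) 2) : ∀ _ : ι, H) i₀) (hyM m hm)
            simp only [ContinuousLinearMap.mul_apply] at this
            rw [hamp, hy_single, amp_single amp hamp, hy_single,
              lp.single_apply_self, lp.single_apply_self] at this
            exact this
          · -- amp z = y
            symm
            ext f i
            have h1 : HasSum (fun j => lp.single 2 j (f j)) f :=
              lp.hasSum_single ENNReal.ofNat_ne_top f
            have h2 : HasSum (fun j => y (lp.single 2 j (f j) : lp (fun _ : ι => H) 2)) (y f) := y.hasSum h1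
            have h3 : HasSum (fun j => y (lp.single 2 j (f j) : lp (fun _ : ι => H) 2)) (amp z f) := by
              refine HasSum.congr_fun ((amp z).hasSum h1) fun j => ?_
              rw [amp_single amp hamp, hy_single]
            rw [h2.unique h3]
        · rintro y ⟨m', hm', rfl⟩
          rw [Set.mem_centralizer_iff]
          rintro g ⟨m, hm, t, rfl⟩
          rw [SetLike.mem_coe, VonNeumannAlgebra.mem_commutant_iff] at hm'
          have h1 : amp m * amp m' = amp m' * amp m := by
            rw [← map_mul, ← map_mul, hm' m hm]
          calc amp m * ampK t * amp m'
              = amp m * (ampK t * amp m') := by rw [mul_assoc]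
            _ = amp m * (amp m' * ampK t) := by
                rw [← amp_comm_ampK amp hamp ampK hampK]
            _ = amp m * amp m' * ampK t := by rw [mul_assoc]
            _ = amp m' * amp m * ampK t := by rw [h1]
            _ = amp m' * (amp m * ampK t) := by rw [mul_assoc]
      rw [hset, Set.mem_centralizer_iff]
      constructor
      · intro hx g hg
        obtain ⟨m', hm', rfl⟩ := hg
        exact hx m' hm'
      · intro hx m' hm'
        exact hx (amp m') ⟨m', hm', rfl⟩
  · -- second part
    intro x hx
    rw [← VonNeumannAlgebra.commutant_commutant M]
    exact VonNeumannAlgebra.mem_commutant_iff.mpr hx
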